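/- Consider $M$ independent Bernoulli trials where each trial fails (is removed) with probability $\varepsilon_B \in [0,1]$. The probability that there is no run of $k$ or more consecutive failures among the $M$ trials is at least $(1 - \varepsilon_B^k)^{M-k+1}$. -/

import Mathlib

open MeasureTheory ProbabilityTheory

section Aux

variable {Ω : Type*}

/-- The event that trial `i` fails. -/
def failSet (X : ℕ → Ω → Bool) (i : ℕ) : Set Ω := {ω | X i ω = false}

/-- The event of a failure run of length `k` starting at `j`. -/
def runSet (X : ℕ → Ω → Bool) (k j : ℕ) : Set Ω := {ω | ∀ r < k, X (j + r) ω = false}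

/-- The event that there is no failure run of length `k` among the first `n` trials. -/
def noRun (X : ℕ → Ω → Bool) (k n : ℕ) : Set Ω :=
  {ω | ¬∃ i : ℕ, i + k ≤ n ∧ ∀ r < k, X (i + r) ω = false}

variable {X : ℕ → Ω → Bool} {k m n : ℕ}

lemma noRun_base : noRun X k k = (runSet X k 0)ᶜ := by
  ext ω
  simp only [noRun, runSet, Set.mem_setOf_eq, Set.mem_compl_iff]
  constructor
  · intro h hP
    exact h ⟨0, by omega, hP⟩
  · rintro h ⟨i, hi, hP⟩
    have : i = 0 := by omega
    subst this
    exact h hP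

lemma noRun_subset : noRun X k m ∩ (failSet X m)ᶜ ⊆ noRun X k (k + m) := by
  rintro ω ⟨h1, h2⟩ ⟨i, hi, hP⟩
  by_cases hik : i + k ≤ m
  · exact h1 ⟨i, hik, hP⟩
  · have hr : m - i < k := by omega
    have := hP (m - i) hr
    have hmi : i + (m - i) = m := by omega
    rw [hmi] at this
    exact h2 this

lemma noRun_inter_run :
    noRun X k (k + m) ∩ runSet X k (m + 1)
      = (noRun X k m ∩ (failSet X m)ᶜ) ∩ runSet X k (m + 1) := by
  ext ω
  simp only [noRun, runSet, failSet, Set.mem_inter_iff, Set.mem_setOf_eq, Set.mem_compl_iff]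
  constructor
  · rintro ⟨h1, h2⟩
    refine ⟨⟨fun ⟨i, hi, hP⟩ => h1 ⟨i, by omega, hP⟩, fun hm => ?_⟩, h2⟩
    refine h1 ⟨m, by omega, fun r hr => ?_⟩
    rcases Nat.eq_zero_or_pos r with h0 | h0
    · simpa [h0] using hm
    · have := h2 (r - 1) (by omega)
      have heq : m + 1 + (r - 1) = m + r := by omega
      rw [heq] at this
      exact this
  · rintro ⟨h12, h2⟩
    exact ⟨fun hx => noRun_subset h12 hx, h2⟩

lemma noRun_succ :
    noRun X k (k + m + 1) = noRun X k (k + m) \ runSet X k (m + 1) := by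
  ext ω
  simp only [noRun, runSet, Set.mem_diff, Set.mem_setOf_eq]
  constructor
  · intro h
    exact ⟨fun ⟨i, hi, hP⟩ => h ⟨i, by omega, hP⟩, fun hP => h ⟨m + 1, by omega, hP⟩⟩
  · rintro ⟨h1, h2⟩ ⟨i, hi, hP⟩
    by_cases hik : i + k ≤ k + m
    · exact h1 ⟨i, hik, hP⟩
    · have : i = m + 1 := by omega
      subst this
      exact h2 hP

end Aux

/-- For `M` independent Bernoulli trials, each failing with
probability `ε_B`, the probability that there is no run of `k` consecutive
failures among the first `M` trials is at least `(1 - ε_B^k)^(M-k+1)`. -/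
theorem stmt_4 {Ω : Type*} [MeasurableSpace Ω] (μ : Measure Ω)
    [IsProbabilityMeasure μ]
    (M k : ℕ) (hk : 0 < k) (hkM : k ≤ M)
    (εB : ℝ) (hεB0 : 0 ≤ εB) (hεB1 : εB ≤ 1)
    (X : ℕ → Ω → Bool)
    (hmeas : ∀ i, Measurable (X i))
    (hindep : iIndepFun X μ)
    (hfail : ∀ i, μ {ω | X i ω = false} = ENNReal.ofReal εB) :
    ENNReal.ofReal ((1 - εB ^ k) ^ (M - k + 1)) ≤
      μ {ω | ¬∃ i : ℕ, i + k ≤ M ∧ ∀ r < k, X (i + r) ω = false} := by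
  classical
  have hεk0 : (0:ℝ) ≤ εB ^ k := pow_nonneg hεB0 k
  have hεk1 : εB ^ k ≤ 1 := pow_le_one₀ hεB0 hεB1
  set mC : ℕ → MeasurableSpace Ω := fun i => MeasurableSpace.comap (X i) inferInstance with hmC
  have hle : ∀ i, mC i ≤ ‹MeasurableSpace Ω› := fun i => (hmeas i).comap_le
  have hAc : ∀ i, MeasurableSet[mC i] (failSet X i) :=
    fun i => ⟨{false}, MeasurableSpace.measurableSet_top, rfl⟩
  have hAs : ∀ (s : Set ℕ) (j : ℕ), j ∈ s → MeasurableSet[⨆ i ∈ s, mC i] (failSet X j) :=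
    fun s j hj => (le_iSup₂ (f := fun i (_ : i ∈ s) => mC i) j hj) _ (hAc j)
  have hRm : ∀ (j : ℕ) (s : Set ℕ), (∀ r < k, j + r ∈ s) →
      MeasurableSet[⨆ i ∈ s, mC i] (runSet X k j) := by
    intro j s hs
    have heq : runSet X k j = ⋂ r, ⋂ (_ : r < k), failSet X (j + r) := by
      ext ω; simp [runSet, failSet]
    rw [heq]
    exact MeasurableSet.iInter fun r => MeasurableSet.iInter fun hr => hAs s _ (hs r hr)
  have hNm : ∀ (n : ℕ) (s : Set ℕ), (∀ j < n, j ∈ s) →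
      MeasurableSet[⨆ i ∈ s, mC i] (noRun X k n) := by
    intro n s hs
    have heq : noRun X k n = (⋃ i, ⋃ (_ : i + k ≤ n), runSet X k i)ᶜ := by
      ext ω; simp [noRun, runSet]
    rw [heq]
    exact (MeasurableSet.iUnion fun i => MeasurableSet.iUnion fun hi =>
      hRm i s fun r hr => hs _ (by omega)).compl
  have hsup_le : ∀ s : Set ℕ, (⨆ i ∈ s, mC i) ≤ ‹MeasurableSpace Ω› :=
    fun s => iSup₂_le fun i _ => hle i
  have hRM : ∀ j, MeasurableSet (runSet X k j) :=
    fun j => hsup_le Set.univ _ (hRm j Set.univ fun _ _ => Set.mem_univ _)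
  have hNM : ∀ n, MeasurableSet (noRun X k n) :=
    fun n => hsup_le Set.univ _ (hNm n Set.univ fun _ _ => Set.mem_univ _)
  -- probability of a run block
  have μRun : ∀ j, μ (runSet X k j) = ENNReal.ofReal (εB ^ k) := by
    intro j
    have heq : runSet X k j
        = ⋂ i ∈ Finset.image (fun r => j + r) (Finset.range k), failSet X i := by
      ext ω
      simp only [runSet, failSet, Set.mem_setOf_eq, Set.mem_iInter, Finset.mem_image,
        Finset.mem_range]
      constructor
      · rintro h i ⟨r, hr, rfl⟩; exact h r hr
      · intro h r hr; exact h (j + r) ⟨r, hr, rfl⟩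
    rw [heq, hindep.meas_biInter (fun i _ => hAc i)]
    rw [Finset.prod_image (fun x _ y _ h => by omega)]
    have : ∀ r ∈ Finset.range k, μ (failSet X (j + r)) = ENNReal.ofReal εB :=
      fun r _ => hfail (j + r)
    rw [Finset.prod_congr rfl this, Finset.prod_const, Finset.card_range,
      ← ENNReal.ofReal_pow hεB0]
  -- key independence inequality
  have hkey : ∀ m : ℕ, μ (noRun X k (k + m) ∩ runSet X k (m + 1))
      ≤ ENNReal.ofReal (εB ^ k) * μ (noRun X k (k + m)) := by
    intro m
    have hindep' : Indep (⨆ i ∈ Set.Iic m, mC i) (⨆ i ∈ (Set.Iic m)ᶜ, mC i) μ :=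
      indep_iSup_of_disjoint hle hindep.iIndep disjoint_compl_right
    have hmul : μ ((noRun X k m ∩ (failSet X m)ᶜ) ∩ runSet X k (m + 1))
        = μ (noRun X k m ∩ (failSet X m)ᶜ) * μ (runSet X k (m + 1)) := by
      refine (Indep_iff _ _ _).1 hindep' _ _ ?_ ?_
      · exact ((hNm m _ fun j hj => by simp only [Set.mem_Iic]; omega).inter
          ((hAs _ m (by simp)).compl))
      · exact hRm (m + 1) _ fun r hr => by
          simp only [Set.mem_compl_iff, Set.mem_Iic, not_le]; omega
    rw [noRun_inter_run, hmul, μRun, mul_comm]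
    exact mul_le_mul_right (measure_mono noRun_subset) _
  have hq : ENNReal.ofReal (1 - εB ^ k) + ENNReal.ofReal (εB ^ k) = 1 := by
    rw [← ENNReal.ofReal_add (by linarith) hεk0]
    norm_num
  -- one induction step
  have hstep : ∀ m : ℕ, ENNReal.ofReal (1 - εB ^ k) * μ (noRun X k (k + m))
      ≤ μ (noRun X k (k + m + 1)) := by
    intro m
    have hsum : μ (noRun X k (k + m) ∩ runSet X k (m + 1)) + μ (noRun X k (k + m + 1))
        = μ (noRun X k (k + m)) := by
      rw [noRun_succ]
      exact measure_inter_add_diff _ (hRM (m + 1))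
    have hne : ENNReal.ofReal (εB ^ k) * μ (noRun X k (k + m)) ≠ ⊤ :=
      ENNReal.mul_ne_top ENNReal.ofReal_ne_top (measure_ne_top μ _)
    have hsplit : ENNReal.ofReal (1 - εB ^ k) * μ (noRun X k (k + m))
        + ENNReal.ofReal (εB ^ k) * μ (noRun X k (k + m)) = μ (noRun X k (k + m)) := by
      rw [← add_mul, hq, one_mul]
    have h3 : ENNReal.ofReal (1 - εB ^ k) * μ (noRun X k (k + m))
        + ENNReal.ofReal (εB ^ k) * μ (noRun X k (k + m))
        ≤ μ (noRun X k (k + m + 1)) + ENNReal.ofReal (εB ^ k) * μ (noRun X k (k + m)) := by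
      rw [hsplit]
      calc μ (noRun X k (k + m))
          = μ (noRun X k (k + m) ∩ runSet X k (m + 1)) + μ (noRun X k (k + m + 1)) := hsum.symm
        _ ≤ ENNReal.ofReal (εB ^ k) * μ (noRun X k (k + m)) + μ (noRun X k (k + m + 1)) :=
            add_le_add_left (hkey m) _
        _ = μ (noRun X k (k + m + 1)) + ENNReal.ofReal (εB ^ k) * μ (noRun X k (k + m)) :=
            add_comm _ _
    exact (ENNReal.add_le_add_iff_right hne).1 h3
  -- the main induction
  have main : ∀ m : ℕ, ENNReal.ofReal ((1 - εB ^ k) ^ (m + 1)) ≤ μ (noRun X k (k + m)) := by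
    intro m
    induction m with
    | zero =>
      simp only [Nat.add_zero]
      rw [noRun_base, pow_one,
        measure_compl (hRM 0) (measure_ne_top μ _), μRun, measure_univ,
        ENNReal.ofReal_sub 1 hεk0, ENNReal.ofReal_one]
    | succ m ih =>
      calc ENNReal.ofReal ((1 - εB ^ k) ^ (m + 1 + 1))
          = ENNReal.ofReal (1 - εB ^ k) * ENNReal.ofReal ((1 - εB ^ k) ^ (m + 1)) := by
            rw [← ENNReal.ofReal_mul (by linarith), ← pow_succ']
        _ ≤ ENNReal.ofReal (1 - εB ^ k) * μ (noRun X k (k + m)) := mul_le_mul_right ih _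
        _ ≤ μ (noRun X k (k + m + 1)) := hstep m
  have hfin := main (M - k)
  have hEq : k + (M - k) = M := by omega
  rw [hEq] at hfin
  exact hfin
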